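/- Let θ : [0,∞) → ℝ^d be differentiable with dθ_i/dt = θ_i (r_i − (Mθ)_i) for all t ≥ 0 and all i, and suppose θ(t) ≥ 0 coordinatewise for all t ≥ 0. Then for all t ≥ 0, d/dt f(θ(t)) = − Σ_{i=1}^d θ_i(t) (r_i − (M θ(t))_i)² ≤ 0; in particular, t ↦ f(θ(t)) is nonincreasing on [0,∞). -/

import Mathlib

open Matrix

/-- Along any nonnegative solution of the DLN ODE, the quadratic loss
`f(θ) = ½‖y‖² − ⟨r, θ⟩ + ½⟨θ, Mθ⟩` has derivative
`−Σᵢ θᵢ (rᵢ − (Mθ)ᵢ)² ≤ 0`; in particular `t ↦ f(θ(t))` is nonincreasing on `[0,∞)`. -/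
theorem dln_loss_nonincreasing (n d : ℕ) (hn : 0 < n) (hd : 0 < d)
    (X : Matrix (Fin n) (Fin d) ℝ) (y : Fin n → ℝ)
    (M : Matrix (Fin d) (Fin d) ℝ) (r : Fin d → ℝ)
    (hM : M = Xᵀ * X) (hr : r = Xᵀ *ᵥ y)
    (f : (Fin d → ℝ) → ℝ)
    (hf : ∀ θ : Fin d → ℝ, f θ =
      (1 / 2) * ∑ j, (y j) ^ 2 - ∑ i, r i * θ i + (1 / 2) * ∑ i, θ i * (M *ᵥ θ) i)
    (θ : ℝ → Fin d → ℝ)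
    (hode : ∀ t ≥ (0 : ℝ), ∀ i,
      HasDerivAt (fun τ => θ τ i) (θ t i * (r i - (M *ᵥ θ t) i)) t)
    (hpos : ∀ t ≥ (0 : ℝ), ∀ i, 0 ≤ θ t i) :
    (∀ t ≥ (0 : ℝ),
      HasDerivAt (fun τ => f (θ τ)) (-(∑ i, θ t i * (r i - (M *ᵥ θ t) i) ^ 2)) t ∧
      -(∑ i, θ t i * (r i - (M *ᵥ θ t) i) ^ 2) ≤ 0) ∧
    AntitoneOn (fun t => f (θ t)) (Set.Ici 0) := by
  have hsym : ∀ i j, M i j = M j i := by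
    subst hM
    intro i j
    simp [Matrix.mul_apply, Matrix.transpose_apply, mul_comm]
  have key : ∀ t ≥ (0 : ℝ),
      HasDerivAt (fun τ => f (θ τ)) (-(∑ i, θ t i * (r i - (M *ᵥ θ t) i) ^ 2)) t := by
    intro t ht
    set D : Fin d → ℝ := fun i => θ t i * (r i - (M *ᵥ θ t) i) with hD
    have h1 : HasDerivAt (fun τ => ∑ i, r i * θ τ i) (∑ i, r i * D i) t :=
      HasDerivAt.fun_sum fun i _ => (hode t ht i).const_mul (r i)
    have h2 : HasDerivAt (fun τ => ∑ i, θ τ i * ∑ j, M i j * θ τ j)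
        (∑ i, (D i * ∑ j, M i j * θ t j + θ t i * ∑ j, M i j * D j)) t := by
      refine HasDerivAt.fun_sum fun i _ => ?_
      exact (hode t ht i).mul (HasDerivAt.fun_sum fun j _ => (hode t ht j).const_mul (M i j))
    have hMv : ∀ τ, ∀ i, (M *ᵥ θ τ) i = ∑ j, M i j * θ τ j := by
      intro τ i
      simp [Matrix.mulVec, dotProduct]
    have hfun : (fun τ => f (θ τ)) = fun τ =>
        (1 / 2) * ∑ j, (y j) ^ 2 - ∑ i, r i * θ τ i
          + (1 / 2) * ∑ i, θ τ i * ∑ j, M i j * θ τ j := by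
      funext τ
      rw [hf (θ τ)]
      simp only [hMv]
    rw [hfun]
    have hD2 : HasDerivAt (fun τ =>
        (1 / 2) * ∑ j, (y j) ^ 2 - ∑ i, r i * θ τ i
          + (1 / 2) * ∑ i, θ τ i * ∑ j, M i j * θ τ j)
        (0 - ∑ i, r i * D i
          + (1 / 2) * ∑ i, (D i * ∑ j, M i j * θ t j + θ t i * ∑ j, M i j * D j)) t :=
      ((hasDerivAt_const t _).sub h1).add (h2.const_mul _)
    convert hD2 using 1
    have hswap : ∑ i, θ t i * ∑ j, M i j * D j = ∑ i, D i * ∑ j, M i j * θ t j := by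
      simp only [Finset.mul_sum]
      rw [Finset.sum_comm]
      refine Finset.sum_congr rfl fun j _ => Finset.sum_congr rfl fun i _ => ?_
      rw [hsym i j]; ring
    simp only [hMv]
    rw [Finset.sum_add_distrib, hswap]
    have heq : -(∑ i, θ t i * (r i - ∑ j, M i j * θ t j) ^ 2)
        = ∑ i, (D i * ∑ j, M i j * θ t j - r i * D i) := by
      rw [← Finset.sum_neg_distrib]
      refine Finset.sum_congr rfl fun i _ => ?_
      rw [hD]
      simp only [hMv]
      ring
    rw [heq, Finset.sum_sub_distrib]
    ring
  refine ⟨fun t ht => ⟨key t ht, ?_⟩, ?_⟩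
  · simp only [neg_nonpos]
    exact Finset.sum_nonneg fun i _ => mul_nonneg (hpos t ht i) (sq_nonneg _)
  · have hconv : Convex ℝ (Set.Ici (0:ℝ)) := convex_Ici 0
    refine antitoneOn_of_deriv_nonpos hconv ?_ ?_ ?_
    · intro t ht
      exact ((key t ht).continuousAt).continuousWithinAt
    · intro t ht
      rw [interior_Ici] at ht
      exact (key t (le_of_lt ht)).differentiableAt.differentiableWithinAt
    · intro t ht
      rw [interior_Ici] at ht
      rw [(key t (le_of_lt ht)).deriv]
      simp only [neg_nonpos]
      exact Finset.sum_nonneg fun i _ => mul_nonneg (hpos t (le_of_lt ht) i) (sq_nonneg _)
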